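/- Let d ∈ ℕ with P_d > 0. If k_d(n⁻, n⁰, n⁺) = 1, then n⁰ = 0. -/

import Mathlib

/-- Total weight `W(v) = Σ_{i : v_i ≠ 0} w_i` of the axes with at least one available split. -/
noncomputable def bartW (p : ℕ) (w : Fin p → ℝ) (v : Fin p → ℕ) : ℝ :=
  ∑ i ∈ Finset.univ.filter (fun i => v i ≠ 0), w i

/-- The BART sub-correlation function `k_d(n⁻, n⁰, n⁺)`, defined by well-founded recursion
on `Σ_i (n⁻_i + n⁺_i)`. -/
noncomputable def bartK (p : ℕ) (w : Fin p → ℝ) (P : ℕ → ℝ)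
    (d : ℕ) (nm n0 np : Fin p → ℕ) : ℝ :=
  if ∀ i, nm i + n0 i + np i = 0 then 1
  else
    1 - P d * (1 - (1 / bartW p w (fun i => nm i + n0 i + np i)) *
      ∑ i ∈ Finset.univ.filter (fun i => nm i + n0 i + np i ≠ 0),
        (w i / ((nm i + n0 i + np i : ℕ) : ℝ)) *
          ((∑ k ∈ (Finset.range (nm i)).attach,
              bartK p w P (d+1) (Function.update nm i k.1) n0 np) +
           (∑ k ∈ (Finset.range (np i)).attach,
              bartK p w P (d+1) nm n0 (Function.update np i k.1))))
termination_by ∑ i, (nm i + np i)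
decreasing_by
  · have hk : k.1 < nm i := Finset.mem_range.mp k.2
    refine Finset.sum_lt_sum (fun j _ => ?_) ⟨i, Finset.mem_univ i, ?_⟩
    · rcases eq_or_ne j i with rfl | hj
      · simp only [Function.update_self]; omega
      · simp only [Function.update_of_ne hj]; omega
    · simp only [Function.update_self]; omega
  · have hk : k.1 < np i := Finset.mem_range.mp k.2
    refine Finset.sum_lt_sum (fun j _ => ?_) ⟨i, Finset.mem_univ i, ?_⟩
    · rcases eq_or_ne j i with rfl | hj
      · simp only [Function.update_self]; omega
      · simp only [Function.update_of_ne hj]; omega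
    · simp only [Function.update_self]; omega

lemma bartW_pos (p : ℕ) (w : Fin p → ℝ) (hw : ∀ i, 0 < w i) (v : Fin p → ℕ)
    (hv : ¬ ∀ i, v i = 0) : 0 < bartW p w v := by
  push_neg at hv
  obtain ⟨i, hi⟩ := hv
  exact Finset.sum_pos (fun j _ => hw j) ⟨i, Finset.mem_filter.mpr ⟨Finset.mem_univ i, hi⟩⟩

lemma bartK_le_one (p : ℕ) (w : Fin p → ℝ) (hw : ∀ i, 0 < w i)
    (P : ℕ → ℝ) (hP : ∀ d, P d ∈ Set.Icc (0 : ℝ) 1)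
    (d : ℕ) (nm n0 np : Fin p → ℕ) : bartK p w P d nm n0 np ≤ 1 := by
  rw [bartK]
  split
  · exact le_refl 1
  · rename_i hne
    have hW : 0 < bartW p w (fun i => nm i + n0 i + np i) :=
      bartW_pos p w hw _ hne
    have hX : (1 / bartW p w (fun i => nm i + n0 i + np i)) *
      ∑ i ∈ Finset.univ.filter (fun i => nm i + n0 i + np i ≠ 0),
        (w i / ((nm i + n0 i + np i : ℕ) : ℝ)) *
          ((∑ k ∈ (Finset.range (nm i)).attach,
              bartK p w P (d+1) (Function.update nm i k.1) n0 np) +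
           (∑ k ∈ (Finset.range (np i)).attach,
              bartK p w P (d+1) nm n0 (Function.update np i k.1))) ≤ 1 := by
      rw [one_div, inv_mul_le_iff₀ hW, mul_one]
      refine Finset.sum_le_sum (fun i hi => ?_)
      have hni : nm i + n0 i + np i ≠ 0 := (Finset.mem_filter.mp hi).2
      have hn_pos : (0 : ℝ) < ((nm i + n0 i + np i : ℕ) : ℝ) := by
        exact_mod_cast Nat.pos_of_ne_zero hni
      have h1 : (∑ k ∈ (Finset.range (nm i)).attach,
            bartK p w P (d+1) (Function.update nm i k.1) n0 np) ≤ (nm i : ℝ) := by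
        calc _ ≤ ∑ k ∈ (Finset.range (nm i)).attach, (1:ℝ) :=
              Finset.sum_le_sum (fun k _ => bartK_le_one p w hw P hP (d+1) _ n0 np)
          _ = (nm i : ℝ) := by simp
      have h2 : (∑ k ∈ (Finset.range (np i)).attach,
            bartK p w P (d+1) nm n0 (Function.update np i k.1)) ≤ (np i : ℝ) := by
        calc _ ≤ ∑ k ∈ (Finset.range (np i)).attach, (1:ℝ) :=
              Finset.sum_le_sum (fun k _ => bartK_le_one p w hw P hP (d+1) nm n0 _)
          _ = (np i : ℝ) := by simp
      have hsum : ((nm i : ℝ) + np i) ≤ ((nm i + n0 i + np i : ℕ) : ℝ) := by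
        push_cast; have := Nat.cast_nonneg (α := ℝ) (n0 i); linarith
      calc w i / ((nm i + n0 i + np i : ℕ) : ℝ) * _
          ≤ w i / ((nm i + n0 i + np i : ℕ) : ℝ) * ((nm i + n0 i + np i : ℕ) : ℝ) := by
            apply mul_le_mul_of_nonneg_left _ (div_nonneg (hw i).le hn_pos.le)
            linarith
        _ = w i := div_mul_cancel₀ _ hn_pos.ne'
    have hPd := hP d
    nlinarith [hPd.1, hPd.2]
termination_by ∑ i, (nm i + np i)
decreasing_by
  · have hk : k.1 < nm i := Finset.mem_range.mp k.2
    refine Finset.sum_lt_sum (fun j _ => ?_) ⟨i, Finset.mem_univ i, ?_⟩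
    · rcases eq_or_ne j i with rfl | hj
      · simp only [Function.update_self]; omega
      · simp only [Function.update_of_ne hj]; omega
    · simp only [Function.update_self]; omega
  · have hk : k.1 < np i := Finset.mem_range.mp k.2
    refine Finset.sum_lt_sum (fun j _ => ?_) ⟨i, Finset.mem_univ i, ?_⟩
    · rcases eq_or_ne j i with rfl | hj
      · simp only [Function.update_self]; omega
      · simp only [Function.update_of_ne hj]; omega
    · simp only [Function.update_self]; omega

lemma bartK_term_le (p : ℕ) (w : Fin p → ℝ) (hw : ∀ i, 0 < w i)
    (P : ℕ → ℝ) (hP : ∀ d, P d ∈ Set.Icc (0 : ℝ) 1)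
    (d : ℕ) (nm n0 np : Fin p → ℕ) (i : Fin p) (hni : nm i + n0 i + np i ≠ 0) :
    (w i / ((nm i + n0 i + np i : ℕ) : ℝ)) *
          ((∑ k ∈ (Finset.range (nm i)).attach,
              bartK p w P (d+1) (Function.update nm i k.1) n0 np) +
           (∑ k ∈ (Finset.range (np i)).attach,
              bartK p w P (d+1) nm n0 (Function.update np i k.1)))
      ≤ (w i / ((nm i + n0 i + np i : ℕ) : ℝ)) * ((nm i + np i : ℕ) : ℝ) := by
  have hn_pos : (0 : ℝ) < ((nm i + n0 i + np i : ℕ) : ℝ) := by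
    exact_mod_cast Nat.pos_of_ne_zero hni
  have h1 : (∑ k ∈ (Finset.range (nm i)).attach,
        bartK p w P (d+1) (Function.update nm i k.1) n0 np) ≤ (nm i : ℝ) := by
    calc _ ≤ ∑ k ∈ (Finset.range (nm i)).attach, (1:ℝ) :=
          Finset.sum_le_sum (fun k _ => bartK_le_one p w hw P hP (d+1) _ n0 np)
      _ = (nm i : ℝ) := by simp
  have h2 : (∑ k ∈ (Finset.range (np i)).attach,
        bartK p w P (d+1) nm n0 (Function.update np i k.1)) ≤ (np i : ℝ) := by
    calc _ ≤ ∑ k ∈ (Finset.range (np i)).attach, (1:ℝ) :=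
          Finset.sum_le_sum (fun k _ => bartK_le_one p w hw P hP (d+1) nm n0 _)
      _ = (np i : ℝ) := by simp
  apply mul_le_mul_of_nonneg_left _ (div_nonneg (hw i).le hn_pos.le)
  push_cast
  linarith

theorem bartK_eq_one_implies_nZero_eq_zero
    (p : ℕ) (hp : 1 ≤ p) (w : Fin p → ℝ) (hw : ∀ i, 0 < w i)
    (P : ℕ → ℝ) (hP : ∀ d, P d ∈ Set.Icc (0 : ℝ) 1)
    (d : ℕ) (hPd : 0 < P d) (nm n0 np : Fin p → ℕ)
    (h : bartK p w P d nm n0 np = 1) :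
    n0 = 0 := by
  by_contra h0
  have hex : ∃ i, n0 i ≠ 0 := by
    by_contra hc; push_neg at hc; exact h0 (funext fun i => hc i)
  obtain ⟨i0, hi0⟩ := hex
  have hne : ¬ ∀ i, nm i + n0 i + np i = 0 := fun hall => hi0 (by have := hall i0; omega)
  rw [bartK, if_neg hne] at h
  have hW := bartW_pos p w hw (fun i => nm i + n0 i + np i) hne
  set S := ∑ i ∈ Finset.univ.filter (fun i => nm i + n0 i + np i ≠ 0),
        (w i / ((nm i + n0 i + np i : ℕ) : ℝ)) *
          ((∑ k ∈ (Finset.range (nm i)).attach,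
              bartK p w P (d+1) (Function.update nm i k.1) n0 np) +
           (∑ k ∈ (Finset.range (np i)).attach,
              bartK p w P (d+1) nm n0 (Function.update np i k.1))) with hS
  set W := bartW p w (fun i => nm i + n0 i + np i) with hWdef
  -- from h : 1 - P d * (1 - (1/W) * S) = 1, deduce S = W
  have hSW : S = W := by
    have h1 : P d * (1 - (1/W) * S) = 0 := by linarith
    have h2 : (1/W) * S = 1 := by
      rcases mul_eq_zero.mp h1 with h' | h'
      · exact absurd h' hPd.ne'
      · linarith
    field_simp at h2
    linarith
  -- but S < W strictly
  have hSlt : S < W := by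
    rw [hS, hWdef, bartW]
    refine Finset.sum_lt_sum (fun i hi => ?_) ⟨i0, ?_, ?_⟩
    · have hni : nm i + n0 i + np i ≠ 0 := (Finset.mem_filter.mp hi).2
      have hn_pos : (0 : ℝ) < ((nm i + n0 i + np i : ℕ) : ℝ) := by
        exact_mod_cast Nat.pos_of_ne_zero hni
      refine le_trans (bartK_term_le p w hw P hP d nm n0 np i hni) ?_
      have hle : ((nm i + np i : ℕ) : ℝ) ≤ ((nm i + n0 i + np i : ℕ) : ℝ) := by
        exact_mod_cast (by omega : nm i + np i ≤ nm i + n0 i + np i)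
      calc w i / ((nm i + n0 i + np i : ℕ) : ℝ) * ((nm i + np i : ℕ) : ℝ)
          ≤ w i / ((nm i + n0 i + np i : ℕ) : ℝ) * ((nm i + n0 i + np i : ℕ) : ℝ) :=
            mul_le_mul_of_nonneg_left hle (div_nonneg (hw i).le hn_pos.le)
        _ = w i := div_mul_cancel₀ _ hn_pos.ne'
    · exact Finset.mem_filter.mpr ⟨Finset.mem_univ i0, by omega⟩
    · have hni : nm i0 + n0 i0 + np i0 ≠ 0 := by omega
      have hn_pos : (0 : ℝ) < ((nm i0 + n0 i0 + np i0 : ℕ) : ℝ) := by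
        exact_mod_cast Nat.pos_of_ne_zero hni
      refine lt_of_le_of_lt (bartK_term_le p w hw P hP d nm n0 np i0 hni) ?_
      have hlt : ((nm i0 + np i0 : ℕ) : ℝ) < ((nm i0 + n0 i0 + np i0 : ℕ) : ℝ) := by
        exact_mod_cast (by omega : nm i0 + np i0 < nm i0 + n0 i0 + np i0)
      calc w i0 / ((nm i0 + n0 i0 + np i0 : ℕ) : ℝ) * ((nm i0 + np i0 : ℕ) : ℝ)
          < w i0 / ((nm i0 + n0 i0 + np i0 : ℕ) : ℝ) * ((nm i0 + n0 i0 + np i0 : ℕ) : ℝ) := by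
            exact mul_lt_mul_of_pos_left hlt (div_pos (hw i0) hn_pos)
        _ = w i0 := div_mul_cancel₀ _ hn_pos.ne'
  linarith
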